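/- Let J be convex, positively one-homogeneous, u_λ a singular vector with singular value λ, and f = γKu_λ + n with constants μ, η > 0 satisfying μK*Ku_λ + ηK*n ∈ ∂J(u_λ) and γ > μ/η. Then a solution of the inverse scale space flow ∂_t p = K*(f − Ku), p(t) ∈ ∂J(u(t)), p(0)=0, is u(t) = 0 for t < t* and u(t) = c·u_λ for t* ≤ t < t**, where c = γ + (λ−μ)/η, t* = λη/(λ + γη − μ), and t** = η; in particular t* < t**. -/

import Mathlib

open scoped RealInnerProductSpace

set_option maxHeartbeats 1000000 in
/-- Unbiased recovery by the inverse scale space flow, noisy data: for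
`f = γ K u_λ + n` with `μ K*K u_λ + η K*n ∈ ∂J(u_λ)` and `γ > μ/η`, the pair
`u(t) = 0` for `t < t*`, `u(t) = c u_λ` for `t* ≤ t < t**` with
`c = γ + (λ−μ)/η`, `t* = λη/(λ + γη − μ)`, `t** = η`, together with the dual
variable `p(t)` (represented in `H` by `P(t) = t • f` for `t < t*` and
`P(t) = t • n + (γt − c(t − t*)) • K u_λ` for `t ≥ t*`), solves the inverse
scale space flow `∂ₜ p = K*(f − Ku)`, `p(t) ∈ ∂J(u(t))`, `p(0) = 0`;
in particular `t* < t**`. -/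
theorem inverse_scale_space_noisy_data
    {U H : Type*} [NormedAddCommGroup U] [NormedSpace ℝ U]
    [NormedAddCommGroup H] [InnerProductSpace ℝ H]
    (K : U →L[ℝ] H) (J : U → ℝ) (hJ0 : J 0 = 0) (hJnn : ∀ u, 0 ≤ J u)
    (hconv : ∀ (u v : U) (t : ℝ), 0 ≤ t → t ≤ 1 →
      J (t • u + (1 - t) • v) ≤ t * J u + (1 - t) * J v)
    (hhom : ∀ (c : ℝ), 0 < c → ∀ u, J (c • u) = c * J u)
    (ulam : U) (lam : ℝ) (hlam : 0 < lam) (hnorm : ‖K ulam‖ = 1)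
    (hsv : ∀ v : U, J ulam + lam * ⟪K ulam, K v - K ulam⟫ ≤ J v)
    (n : H) (γ μ η : ℝ) (hγ : 0 < γ) (hμ : 0 < μ) (hη : 0 < η)
    (hmem : ∀ v : U, J ulam + ⟪μ • K ulam + η • n, K v - K ulam⟫ ≤ J v)
    (hsnr : μ / η < γ) :
    let c : ℝ := γ + (lam - μ) / η
    let tstar : ℝ := lam * η / (lam + γ * η - μ)
    let tstar2 : ℝ := η
    let f : H := γ • K ulam + n
    let u : ℝ → U := fun t => if t < tstar then 0 else c • ulam
    let P : ℝ → H := fun t =>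
      if t < tstar then t • f else t • n + (γ * t - c * (t - tstar)) • K ulam
    tstar < tstar2 ∧
    P 0 = 0 ∧
    (∀ t : ℝ, 0 ≤ t → t < tstar2 → ∀ v : U, J (u t) + ⟪P t, K v - K (u t)⟫ ≤ J v) ∧
    (∀ t : ℝ, 0 ≤ t → t < tstar2 → t ≠ tstar → ∀ v : U,
      HasDerivAt (fun s : ℝ => (⟪P s, K v⟫ : ℝ)) ⟪f - K (u t), K v⟫ t) := by

  intro c tstar tstar2 f u P
  have hγημ : μ < γ * η := (div_lt_iff₀ hη).mp hsnr
  have hden : 0 < lam + γ * η - μ := by linarith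
  have hts_pos : (0:ℝ) < tstar := div_pos (by positivity) hden
  have hts_lt : tstar < tstar2 := by
    show lam * η / (lam + γ * η - μ) < η
    rw [div_lt_iff₀ hden]; nlinarith
  have hts_eq : tstar * (lam + γ * η - μ) = lam * η := by
    show lam * η / (lam + γ * η - μ) * (lam + γ * η - μ) = lam * η
    exact div_mul_cancel₀ _ hden.ne'
  have hcη : c * η = γ * η + lam - μ := by
    show (γ + (lam - μ) / η) * η = γ * η + lam - μ
    field_simp
    ring
  have hc_pos : 0 < c := by nlinarith [hcη]
  have hKK : ⟪K ulam, K ulam⟫ = 1 := by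
    rw [real_inner_self_eq_norm_sq, hnorm]; norm_num
  have hJu : J ulam = lam := by
    have h0 := hsv 0
    have h2 := hsv ((2:ℝ) • ulam)
    have hh2 : J ((2:ℝ) • ulam) = 2 * J ulam := hhom 2 (by norm_num) ulam
    simp [inner_sub_right, real_inner_smul_right, hKK, hnorm, hJ0, hh2] at h0 h2
    linarith
  have hν : μ + η * ⟪n, K ulam⟫ = lam := by
    have hq0 := hmem 0
    have hq2 := hmem ((2:ℝ) • ulam)
    have hh2 : J ((2:ℝ) • ulam) = 2 * J ulam := hhom 2 (by norm_num) ulam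
    simp [inner_sub_right, real_inner_smul_right, inner_add_left, real_inner_smul_left,
      hKK, hnorm, hJ0, hh2, hJu] at hq0 hq2
    linarith
  have hsub : ∀ v : U, lam * ⟪K ulam, K v⟫ ≤ J v := by
    intro v
    have := hsv v
    simp [inner_sub_right, hKK, hnorm, hJu] at this
    linarith
  have hsub2 : ∀ v : U, μ * ⟪K ulam, K v⟫ + η * ⟪n, K v⟫ ≤ J v := by
    intro v
    have := hmem v
    simp [inner_sub_right, inner_add_left, real_inner_smul_left, hKK, hnorm, hJu] at this
    linarith
  clear_value c tstar
  refine ⟨hts_lt, ?_, ?_, ?_⟩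
  · show (if (0:ℝ) < tstar then (0:ℝ) • f else (0:ℝ) • n + (γ * 0 - c * (0 - tstar)) • K ulam) = 0
    rw [if_pos hts_pos, zero_smul]
  · intro t ht ht2 v
    by_cases htt : t < tstar
    · have htd : t * (lam + γ * η - μ) < lam * η := by
        calc t * (lam + γ * η - μ) < tstar * (lam + γ * η - μ) :=
              mul_lt_mul_of_pos_right htt hden
          _ = lam * η := hts_eq
      have h1 := hsub v
      have h2 := hsub2 v
      have hJ := hJnn v
      simp only [u, P, if_pos htt]
      rw [map_zero, sub_zero, hJ0, zero_add]
      have hex : ⟪t • f, K v⟫ = t * (γ * ⟪K ulam, K v⟫ + ⟪n, K v⟫) := by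
        show ⟪t • (γ • K ulam + n), K v⟫ = _
        rw [real_inner_smul_left, inner_add_left, real_inner_smul_left]
      rw [hex]
      have e1 : 0 ≤ t * (γ * η - μ) * (J v - lam * ⟪K ulam, K v⟫) :=
        mul_nonneg (mul_nonneg ht (by linarith)) (by linarith)
      have e2 : 0 ≤ t * lam * (J v - (μ * ⟪K ulam, K v⟫ + η * ⟪n, K v⟫)) :=
        mul_nonneg (mul_nonneg ht hlam.le) (by linarith)
      have e3 : 0 ≤ (lam * η - t * (lam + γ * η - μ)) * J v :=
        mul_nonneg (by linarith) hJ
      have key : lam * η * (t * (γ * ⟪K ulam, K v⟫ + ⟪n, K v⟫)) ≤ lam * η * J v := by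
        nlinarith [e1, e2, e3]
      exact le_of_mul_le_mul_left key (by positivity)
    · have ht' : tstar ≤ t := not_lt.mp htt
      have ht2' : t < η := ht2
      have h1 := hsub v
      have h2 := hsub2 v
      have hJ := hJnn v
      simp only [u, P, if_neg htt]
      rw [map_smul]
      have hJc : J (c • ulam) = c * lam := by rw [hhom c hc_pos, hJu]
      rw [hJc]
      set w : ℝ := γ * t - c * (t - tstar) with hw
      have hwη : w * η = (η - t) * lam + t * μ := by
        rw [hw]; linear_combination (tstar - t) * hcη + hts_eq
      have hPu : t * ⟪n, K ulam⟫ + w = lam := by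
        have hkey : η * (t * ⟪n, K ulam⟫ + w) = η * lam := by
          linear_combination t * hν + hwη
        exact mul_left_cancel₀ hη.ne' hkey
      have hPc : ⟪t • n + w • K ulam, c • K ulam⟫ = c * lam := by
        rw [real_inner_smul_right, inner_add_left, real_inner_smul_left,
          real_inner_smul_left, hKK, mul_one, hPu]
      have hexv : ⟪t • n + w • K ulam, K v - c • K ulam⟫
          = t * ⟪n, K v⟫ + w * ⟪K ulam, K v⟫ - c * lam := by
        rw [inner_sub_right, hPc, inner_add_left, real_inner_smul_left,
          real_inner_smul_left]
      rw [hexv]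
      have e1 : 0 ≤ (η - t) * (J v - lam * ⟪K ulam, K v⟫) :=
        mul_nonneg (by linarith) (by linarith)
      have e2 : 0 ≤ t * (J v - (μ * ⟪K ulam, K v⟫ + η * ⟪n, K v⟫)) :=
        mul_nonneg ht (by linarith)
      have hwx : w * η * ⟪K ulam, K v⟫ = ((η - t) * lam + t * μ) * ⟪K ulam, K v⟫ := by
        rw [hwη]
      have key : η * (c * lam + (t * ⟪n, K v⟫ + w * ⟪K ulam, K v⟫ - c * lam)) ≤ η * J v := by
        nlinarith [e1, e2, hwx]
      exact le_of_mul_le_mul_left key hη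
  · intro t ht ht2 hne v
    by_cases htt : t < tstar
    · have hev : (fun s : ℝ => (⟪P s, K v⟫ : ℝ)) =ᶠ[nhds t] fun s => s * ⟪f, K v⟫ := by
        filter_upwards [Iio_mem_nhds htt] with s hs
        have hs' : s < tstar := hs
        simp only [P]
        rw [if_pos hs', real_inner_smul_left]
      have hd : HasDerivAt (fun s : ℝ => s * ⟪f, K v⟫) ⟪f, K v⟫ t := by
        simpa using (hasDerivAt_id t).mul_const (⟪f, K v⟫ : ℝ)
      have hut : K (u t) = 0 := by
        simp only [u, if_pos htt, map_zero]
      rw [hut, sub_zero]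
      exact hd.congr_of_eventuallyEq hev
    · have htt' : tstar < t := lt_of_le_of_ne (not_lt.mp htt) (Ne.symm hne)
      have hev : (fun s : ℝ => (⟪P s, K v⟫ : ℝ)) =ᶠ[nhds t]
          fun s => s * ⟪n, K v⟫ + (γ * s - c * (s - tstar)) * ⟪K ulam, K v⟫ := by
        filter_upwards [Ioi_mem_nhds htt'] with s hs
        have hs' : tstar < s := hs
        have hns : ¬ s < tstar := not_lt.mpr hs'.le
        simp only [P]
        rw [if_neg hns, inner_add_left, real_inner_smul_left, real_inner_smul_left]
      have hd : HasDerivAt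
          (fun s : ℝ => s * ⟪n, K v⟫ + (γ * s - c * (s - tstar)) * ⟪K ulam, K v⟫)
          (⟪n, K v⟫ + (γ - c) * ⟪K ulam, K v⟫) t := by
        have d1 : HasDerivAt (fun s : ℝ => s * ⟪n, K v⟫) (⟪n, K v⟫ : ℝ) t := by
          simpa using (hasDerivAt_id t).mul_const (⟪n, K v⟫ : ℝ)
        have d2 : HasDerivAt (fun s : ℝ => (γ * s - c * (s - tstar)) * ⟪K ulam, K v⟫)
            ((γ - c) * ⟪K ulam, K v⟫) t := by
          have d3 : HasDerivAt (fun s : ℝ => γ * s - c * (s - tstar)) (γ - c) t := by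
            exact (((hasDerivAt_id' t).const_mul γ).sub
              (((hasDerivAt_id' t).sub_const tstar).const_mul c)).congr_deriv (by ring)
          exact d3.mul_const _
        exact d1.add d2
      have hval : (⟪f - K (u t), K v⟫ : ℝ) = ⟪n, K v⟫ + (γ - c) * ⟪K ulam, K v⟫ := by
        simp only [u, if_neg htt, map_smul, f]
        rw [inner_sub_left, inner_add_left, real_inner_smul_left, real_inner_smul_left]
        ring
      rw [hval]
      exact hd.congr_of_eventuallyEq hev
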